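/- Let Ŝ be an asymmetric nonnegative balancing function and C* a minimizer of cut(C,V∖C)/Ŝ(C). Then the matrix F with F_1 = 1_{V∖C*} and F_l = α_l 1_{C*} (l=2,...,k, α_l>0, ∑_{l≥2}α_l=1) satisfies the row-simplex constraints and has objective value ∑_{l=1}^k TV(F_l)/S(F_l) = cut(C*,V∖C*)/Ŝ(V∖C*) + (k−1)·cut(C*,V∖C*)/Ŝ(C*). -/

import Mathlib

open Finset

/-- Lovasz extension of a set function `Sh` on `V = Fin n`. -/
noncomputable def lovasz {n : ℕ} (Sh : Finset (Fin n) → ℝ) (f : Fin n → ℝ) : ℝ :=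
  ∑ i : Fin n,
    f (Tuple.sort f i) *
      (Sh (if (i : ℕ) = 0 then Finset.univ
            else Finset.univ.filter
              (fun j => f (Tuple.sort f ⟨(i : ℕ) - 1, lt_of_le_of_lt (Nat.sub_le _ _) i.isLt⟩) < f j))
        - Sh (Finset.univ.filter (fun j => f (Tuple.sort f i) < f j)))

/-- cut(A,B) = ∑_{i∈A, j∈B} w_{ij}. -/
noncomputable def cutF {n : ℕ} (W : Matrix (Fin n) (Fin n) ℝ) (A B : Finset (Fin n)) : ℝ :=
  ∑ i ∈ A, ∑ j ∈ B, W i j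

/-- Total variation TV(f) = (1/2) ∑_{i,j} w_{ij} |f_i - f_j|. -/
noncomputable def tv {n : ℕ} (W : Matrix (Fin n) (Fin n) ℝ) (f : Fin n → ℝ) : ℝ :=
  (1 / 2) * ∑ i : Fin n, ∑ j : Fin n, W i j * |f i - f j|

/-- Indicator vector of a set. -/
noncomputable def indic {n : ℕ} (A : Finset (Fin n)) : Fin n → ℝ :=
  fun i => if i ∈ A then 1 else 0

lemma sorted_indic {n : ℕ} (A : Finset (Fin n)) (hA : A.Nonempty) (c : ℝ) (hc : 0 < c)
    (f : Fin n → ℝ) (hf : f = fun i => c * indic A i) (i : Fin n) :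
    f (Tuple.sort f i) = if (i : ℕ) < n - A.card then 0 else c := by
  have hval : ∀ j, f j = 0 ∨ f j = c := by
    intro j; by_cases h : j ∈ A <;> simp [hf, indic, h]
  have hfc : ∀ j, f j = c ↔ j ∈ A := by
    intro j; by_cases h : j ∈ A <;> simp [hf, indic, h, hc.ne, hc.ne']
  have hmono := Tuple.monotone_sort f
  set T : Finset (Fin n) := univ.filter (fun i => f (Tuple.sort f i) = c) with hT
  have hup : ∀ i j : Fin n, i ≤ j → f (Tuple.sort f i) = c → f (Tuple.sort f j) = c := by
    intro i j hij hi
    have h1 : c ≤ f (Tuple.sort f j) := hi ▸ hmono hij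
    rcases hval (Tuple.sort f j) with h | h
    · exfalso; rw [h] at h1; linarith
    · exact h
  have hTcard : T.card = A.card := by
    have himg : T.image (Tuple.sort f) = A := by
      ext j
      simp only [mem_image, hT, mem_filter, mem_univ, true_and]
      constructor
      · rintro ⟨i, hi, rfl⟩; exact (hfc _).1 hi
      · intro hj
        exact ⟨(Tuple.sort f).symm j, by simpa using (hfc j).2 hj, by simp⟩
    rw [← himg, card_image_of_injective _ (Tuple.sort f).injective]
  have key : ∀ i : Fin n, f (Tuple.sort f i) = c ↔ n - A.card ≤ (i : ℕ) := by
    intro i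
    constructor
    · intro hi
      have hsub : Finset.Ici i ⊆ T := by
        intro j hj
        simp only [hT, mem_filter, mem_univ, true_and]
        exact hup i j (mem_Ici.1 hj) hi
      have := card_le_card hsub
      rw [Fin.card_Ici, hTcard] at this
      have := i.isLt; omega
    · intro hi
      have hTne : T.Nonempty := by
        obtain ⟨a, ha⟩ := hA
        exact ⟨(Tuple.sort f).symm a, by
          simp only [hT, mem_filter, mem_univ, true_and]
          simpa using (hfc a).2 ha⟩
      set i₀ := T.min' hTne with hi₀
      have hsub : T ⊆ Finset.Ici i₀ := fun j hj => mem_Ici.2 (T.min'_le j hj)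
      have hcard := card_le_card hsub
      rw [Fin.card_Ici, hTcard] at hcard
      have hlt : (i₀ : ℕ) < n := i₀.isLt
      have h1 : (i₀ : ℕ) ≤ (i : ℕ) := by omega
      have hmem := T.min'_mem hTne
      simp only [hT, mem_filter, mem_univ, true_and] at hmem
      exact hup i₀ i (Fin.le_def.2 h1) hmem
  by_cases h : (i : ℕ) < n - A.card
  · simp only [h, if_true]
    rcases hval (Tuple.sort f i) with h' | h'
    · exact h'
    · exact absurd ((key i).1 h') (by omega)
  · simp only [h, if_false]
    exact (key i).2 (by omega)

lemma lovasz_scaled_indic {n : ℕ} (Sh : Finset (Fin n) → ℝ) (h0 : Sh ∅ = 0)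
    (A : Finset (Fin n)) (hA : A.Nonempty) (hAp : A ≠ Finset.univ) (c : ℝ) (hc : 0 < c)
    (f : Fin n → ℝ) (hf : f = fun i => c * indic A i) :
    lovasz Sh f = c * Sh A := by
  have hcardle : A.card ≤ n := by simpa using A.card_le_univ
  have hcardne : A.card ≠ n := by
    intro h
    exact hAp (A.eq_univ_of_card (by simpa using h))
  have hcardpos : 0 < A.card := card_pos.2 hA
  set m := n - A.card with hm
  have hm1 : 1 ≤ m := by omega
  have hmn : m < n := by omega
  have hsort := sorted_indic A hA c hc f hf
  have hle : ∀ j, f j ≤ c := by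
    intro j; by_cases h : j ∈ A <;> simp [hf, indic, h] <;> linarith
  have hempty : univ.filter (fun j => c < f j) = ∅ := by
    ext j; simp only [mem_filter, mem_univ, true_and, notMem_empty, iff_false, not_lt]
    exact hle j
  have hAfil : univ.filter (fun j => (0:ℝ) < f j) = A := by
    ext j; by_cases h : j ∈ A <;> simp [hf, indic, h, hc]
  rw [lovasz, Finset.sum_eq_single (⟨m, hmn⟩ : Fin n)]
  · simp only [hsort, Fin.val_mk]
    rw [if_neg (lt_irrefl m), if_neg (by omega : ¬ m = 0), if_pos (by omega : m - 1 < m),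
      hAfil, hempty, h0]
    ring
  · intro b _ hb
    have hbne : (b : ℕ) ≠ m := fun h => hb (Fin.ext h)
    by_cases hblt : (b : ℕ) < m
    · simp only [hsort, Fin.val_mk]
      rw [if_pos hblt, zero_mul]
    · have hbm : m < (b : ℕ) := by omega
      simp only [hsort, Fin.val_mk]
      rw [if_neg hblt, if_neg (by omega : ¬ (b : ℕ) = 0),
        if_neg (by omega : ¬ (b : ℕ) - 1 < m), hempty, sub_self, mul_zero]
  · intro h; exact absurd (mem_univ _) h

lemma cutF_symm {n : ℕ} (W : Matrix (Fin n) (Fin n) ℝ) (hWsym : ∀ i j, W i j = W j i)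
    (A B : Finset (Fin n)) : cutF W A B = cutF W B A := by
  rw [cutF, cutF]; refine Finset.sum_comm.trans ?_
  exact Finset.sum_congr rfl fun i _ => Finset.sum_congr rfl fun j _ => hWsym j i

lemma tv_scaled_indic {n : ℕ} (W : Matrix (Fin n) (Fin n) ℝ)
    (hWsym : ∀ i j, W i j = W j i) (A : Finset (Fin n)) (c : ℝ) (hc : 0 ≤ c)
    (f : Fin n → ℝ) (hf : f = fun i => c * indic A i) :
    tv W f = c * cutF W A Aᶜ := by
  have expand : ∑ i : Fin n, ∑ j : Fin n, W i j * |f i - f j|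
      = (∑ i ∈ A, (∑ j ∈ A, W i j * |f i - f j| + ∑ j ∈ Aᶜ, W i j * |f i - f j|))
      + ∑ i ∈ Aᶜ, (∑ j ∈ A, W i j * |f i - f j| + ∑ j ∈ Aᶜ, W i j * |f i - f j|) := by
    rw [← Finset.sum_add_sum_compl A]
    congr 1 <;> exact Finset.sum_congr rfl fun i _ => (Finset.sum_add_sum_compl A _).symm
  have hAA : ∑ i ∈ A, ∑ j ∈ A, W i j * |f i - f j| = 0 :=
    Finset.sum_eq_zero fun i hi => Finset.sum_eq_zero fun j hj => by
      simp [hf, indic, hi, hj]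
  have hBB : ∑ i ∈ Aᶜ, ∑ j ∈ Aᶜ, W i j * |f i - f j| = 0 :=
    Finset.sum_eq_zero fun i hi => Finset.sum_eq_zero fun j hj => by
      simp [hf, indic, (Finset.mem_compl.1 hi), (Finset.mem_compl.1 hj)]
  have hAB : ∑ i ∈ A, ∑ j ∈ Aᶜ, W i j * |f i - f j| = c * cutF W A Aᶜ := by
    rw [cutF, Finset.mul_sum]
    refine Finset.sum_congr rfl fun i hi => ?_
    rw [Finset.mul_sum]
    refine Finset.sum_congr rfl fun j hj => ?_
    have hj' : j ∉ A := Finset.mem_compl.1 hj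
    simp only [hf, indic, if_pos hi, if_neg hj', mul_one, mul_zero, sub_zero,
      abs_of_nonneg hc]
    ring
  have hBA : ∑ i ∈ Aᶜ, ∑ j ∈ A, W i j * |f i - f j| = c * cutF W Aᶜ A := by
    rw [cutF, Finset.mul_sum]
    refine Finset.sum_congr rfl fun i hi => ?_
    rw [Finset.mul_sum]
    refine Finset.sum_congr rfl fun j hj => ?_
    have hi' : i ∉ A := Finset.mem_compl.1 hi
    simp only [hf, indic, if_pos hj, if_neg hi', mul_one, mul_zero, zero_sub, abs_neg,
      abs_of_nonneg hc]
    ring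
  rw [tv, expand, Finset.sum_add_distrib, Finset.sum_add_distrib, hAA, hBB, hAB, hBA,
    cutF_symm W hWsym Aᶜ A]
  ring

/-- For an asymmetric balancing function and an optimal 2-cut set C*, the matrix
F₁ = 1_{V∖C*}, F_l = α_l·1_{C*} (l ≥ 2) is row-simplex feasible with objective
cut(C*,V∖C*)/Ŝ(V∖C*) + (k−1)·cut(C*,V∖C*)/Ŝ(C*). -/
theorem degenerate_solution_asymmetric {n k : ℕ} [NeZero k] (hk : 2 ≤ k)
    (W : Matrix (Fin n) (Fin n) ℝ)
    (hW : ∀ i j, 0 ≤ W i j) (hWsym : ∀ i j, W i j = W j i)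
    (Sh : Finset (Fin n) → ℝ) (h0 : Sh ∅ = 0) (hnn : ∀ A, 0 ≤ Sh A)
    (hpos : ∀ C : Finset (Fin n), C.Nonempty → C ≠ Finset.univ → 0 < Sh C)
    (Cs : Finset (Fin n)) (hCne : Cs.Nonempty) (hCp : Cs ≠ Finset.univ)
    (hmin : ∀ C : Finset (Fin n), C.Nonempty → C ≠ Finset.univ →
      cutF W Cs Csᶜ / Sh Cs ≤ cutF W C Cᶜ / Sh C)
    (α : Fin k → ℝ) (hα : ∀ l, l ≠ 0 → 0 < α l)
    (hαsum : ∑ l ∈ Finset.univ.filter (fun l => l ≠ (0 : Fin k)), α l = 1)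
    (F : Fin n → Fin k → ℝ)
    (hF0 : ∀ i, F i 0 = indic Csᶜ i)
    (hFl : ∀ i l, l ≠ 0 → F i l = α l * indic Cs i) :
    (∀ i l, 0 ≤ F i l) ∧ (∀ i, ∑ l, F i l = 1) ∧
    (∑ l, tv W (fun i => F i l) / lovasz Sh (fun i => F i l)) =
      cutF W Cs Csᶜ / Sh Csᶜ + (k - 1 : ℝ) * (cutF W Cs Csᶜ / Sh Cs) := by
  have hindnn : ∀ (A : Finset (Fin n)) (i : Fin n), 0 ≤ indic A i := by
    intro A i; unfold indic; split <;> norm_num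
  have hCcne : Csᶜ.Nonempty := by
    rwa [Finset.nonempty_iff_ne_empty, ne_eq, Finset.compl_eq_empty_iff]
  have hCcp : Csᶜ ≠ Finset.univ := by
    intro h
    obtain ⟨x, hx⟩ := hCne
    have : x ∈ Csᶜ := h ▸ Finset.mem_univ x
    exact (Finset.mem_compl.1 this) hx
  refine ⟨?_, ?_, ?_⟩
  · intro i l
    by_cases hl : l = 0
    · rw [hl, hF0]; exact hindnn _ _
    · rw [hFl i l hl]; exact mul_nonneg (hα l hl).le (hindnn _ _)
  · intro i
    have hfilnot : univ.filter (fun l => ¬ l ≠ (0 : Fin k)) = {0} := by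
      ext l; simp
    have hsplit := Finset.sum_filter_add_sum_filter_not univ
      (fun l => l ≠ (0 : Fin k)) (fun l => F i l)
    rw [← hsplit, hfilnot, Finset.sum_singleton]
    by_cases hi : i ∈ Cs
    · have h1 : ∑ l ∈ univ.filter (fun l => l ≠ (0 : Fin k)), F i l = 1 := by
        rw [← hαsum]
        refine Finset.sum_congr rfl fun l hl => ?_
        rw [hFl i l (Finset.mem_filter.1 hl).2]
        simp [indic, hi]
      have h2 : F i 0 = 0 := by
        rw [hF0]; simp [indic, hi]
      rw [h1, h2]; ring
    · have h1 : ∑ l ∈ univ.filter (fun l => l ≠ (0 : Fin k)), F i l = 0 :=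
        Finset.sum_eq_zero fun l hl => by
          rw [hFl i l (Finset.mem_filter.1 hl).2]
          simp [indic, hi]
      have h2 : F i 0 = 1 := by
        rw [hF0]; simp [indic, hi]
      rw [h1, h2]; ring
  · have hterm0 : tv W (fun i => F i 0) / lovasz Sh (fun i => F i 0)
        = cutF W Cs Csᶜ / Sh Csᶜ := by
      have hfe : (fun i => F i 0) = fun i => (1:ℝ) * indic Csᶜ i := by
        funext i; rw [hF0]; ring
      rw [tv_scaled_indic W hWsym Csᶜ 1 one_pos.le _ hfe,
        lovasz_scaled_indic Sh h0 Csᶜ hCcne hCcp 1 one_pos _ hfe, one_mul, one_mul,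
        compl_compl, cutF_symm W hWsym Csᶜ Cs]
    have hterml : ∀ l : Fin k, l ≠ 0 →
        tv W (fun i => F i l) / lovasz Sh (fun i => F i l) = cutF W Cs Csᶜ / Sh Cs := by
      intro l hl
      have hfe : (fun i => F i l) = fun i => α l * indic Cs i := by
        funext i; rw [hFl i l hl]
      rw [tv_scaled_indic W hWsym Cs (α l) (hα l hl).le _ hfe,
        lovasz_scaled_indic Sh h0 Cs hCne hCp (α l) (hα l hl) _ hfe,
        mul_div_mul_left _ _ (hα l hl).ne']
    rw [← Finset.add_sum_erase univ _ (Finset.mem_univ (0 : Fin k)), hterm0]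
    congr 1
    have hconst : ∑ l ∈ univ.erase (0 : Fin k),
        tv W (fun i => F i l) / lovasz Sh (fun i => F i l)
        = ∑ l ∈ univ.erase (0 : Fin k), cutF W Cs Csᶜ / Sh Cs :=
      Finset.sum_congr rfl fun l hl => hterml l (Finset.mem_erase.1 hl).1
    rw [hconst, Finset.sum_const, Finset.card_erase_of_mem (Finset.mem_univ _),
      Finset.card_univ, Fintype.card_fin, nsmul_eq_mul, Nat.cast_sub (by omega : 1 ≤ k),
      Nat.cast_one]
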